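/- For all integers s, t ≥ 2, the grid graph P_s □ P_t has metric dimension 2. -/

import Mathlib

open SimpleGraph

/-- `W` is a resolving set of `G`: every pair of distinct vertices is
distinguished by its distance to some vertex of `W`. -/
def IsResolving {V : Type*} (G : SimpleGraph V) (W : Set V) : Prop :=
  ∀ x y : V, x ≠ y → ∃ z ∈ W, G.dist x z ≠ G.dist y z

/-- The metric dimension of `G`: the minimum cardinality of a resolving set. -/
noncomputable def metricDim {V : Type*} (G : SimpleGraph V) : ℕ :=
  sInf {n | ∃ W : Set V, W.ncard = n ∧ IsResolving G W}

lemma pathGraph_walk_le {n : ℕ} {i j : Fin n} (w : (pathGraph n).Walk i j) :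
    Nat.dist i.val j.val ≤ w.length := by
  induction w with
  | nil => simp [Nat.dist]
  | @cons u v y h w ih =>
    rw [pathGraph_adj] at h
    have := Nat.dist.triangle_inequality u.val v.val y.val
    have h1 : Nat.dist u.val v.val = 1 := by simp [Nat.dist]; omega
    simp only [Walk.length_cons]
    omega

lemma pathGraph_exists_walk {n : ℕ} : ∀ (k : ℕ) (i j : Fin n), Nat.dist i.val j.val = k →
    ∃ w : (pathGraph n).Walk i j, w.length = k := by
  intro k
  induction k with
  | zero =>
    intro i j h
    have : i = j := by
      apply Fin.ext
      simp [Nat.dist] at h; omega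
    subst this
    exact ⟨Walk.nil, rfl⟩
  | succ k ih =>
    intro i j h
    simp only [Nat.dist] at h
    rcases lt_or_ge i.val j.val with hlt | hle
    · have hi' : i.val + 1 < n := lt_of_le_of_lt hlt j.isLt
      set i' : Fin n := ⟨i.val + 1, hi'⟩ with hi'def
      have hadj : (pathGraph n).Adj i i' := by rw [pathGraph_adj]; left; rfl
      obtain ⟨w, hw⟩ := ih i' j (by simp [Nat.dist, hi'def]; omega)
      exact ⟨Walk.cons hadj w, by simp [hw]⟩
    · have hj : j.val < i.val := by omega
      have hi' : i.val - 1 < n := by omega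
      set i' : Fin n := ⟨i.val - 1, hi'⟩ with hi'def
      have hadj : (pathGraph n).Adj i i' := by rw [pathGraph_adj]; right; simp [hi'def]; omega
      obtain ⟨w, hw⟩ := ih i' j (by simp [Nat.dist, hi'def]; omega)
      exact ⟨Walk.cons hadj w, by simp [hw]⟩

lemma pathGraph_dist {n : ℕ} (i j : Fin n) :
    (pathGraph n).dist i j = Nat.dist i.val j.val := by
  obtain ⟨w, hw⟩ := pathGraph_exists_walk (Nat.dist i.val j.val) i j rfl
  refine le_antisymm (hw ▸ dist_le w) ?_
  obtain ⟨w', hw'⟩ := (Walk.reachable w).exists_walk_length_eq_dist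
  rw [← hw']
  exact pathGraph_walk_le w'

lemma boxProd_walk_le {α β : Type*} {G : SimpleGraph α} {H : SimpleGraph β}
    (hG : G.Connected) (hH : H.Connected) {x y : α × β} (w : (G □ H).Walk x y) :
    G.dist x.1 y.1 + H.dist x.2 y.2 ≤ w.length := by
  induction w with
  | nil => simp
  | @cons u v y h w ih =>
    simp only [Walk.length_cons]
    rcases h with ⟨hA, he⟩ | ⟨hA, he⟩
    · have h1 : G.dist u.1 v.1 = 1 := dist_eq_one_iff_adj.mpr hA
      have h2 := hG.dist_triangle (u := u.1) (v := v.1) (w := y.1)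
      rw [he]
      omega
    · have h1 : H.dist u.2 v.2 = 1 := dist_eq_one_iff_adj.mpr hA
      have h2 := hH.dist_triangle (u := u.2) (v := v.2) (w := y.2)
      rw [he]
      omega

lemma boxProd_dist {α β : Type*} {G : SimpleGraph α} {H : SimpleGraph β}
    (hG : G.Connected) (hH : H.Connected) (x y : α × β) :
    (G □ H).dist x y = G.dist x.1 y.1 + H.dist x.2 y.2 := by
  refine le_antisymm ?_ ?_
  · obtain ⟨w1, h1⟩ := hG.exists_walk_length_eq_dist x.1 y.1
    obtain ⟨w2, h2⟩ := hH.exists_walk_length_eq_dist x.2 y.2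
    have := dist_le ((w1.boxProdLeft H x.2).append (w2.boxProdRight G y.1))
    have hl : ((w1.boxProdLeft H x.2).append (w2.boxProdRight G y.1)).length
        = G.dist x.1 y.1 + H.dist x.2 y.2 := by
      have e1 : (w1.boxProdLeft H x.2).length = w1.length := Walk.length_map _ _
      have e2 : (w2.boxProdRight G y.1).length = w2.length := Walk.length_map _ _
      rw [Walk.length_append, e1, e2, h1, h2]
    rw [hl] at this
    simpa using this
  · obtain ⟨w, hw⟩ := (hG.boxProd hH).exists_walk_length_eq_dist x y
    rw [← hw]
    exact boxProd_walk_le hG hH w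

/-- For `s, t ≥ 2`, the grid graph `P_s □ P_t` has metric dimension 2. -/
theorem metricDim_grid (s t : ℕ) (hs : 2 ≤ s) (ht : 2 ≤ t) :
    metricDim (pathGraph s □ pathGraph t) = 2 := by
  have hsc : (pathGraph s).Connected := by
    obtain ⟨k, rfl⟩ : ∃ k, s = k + 1 := ⟨s - 1, by omega⟩
    exact pathGraph_connected k
  have htc : (pathGraph t).Connected := by
    obtain ⟨k, rfl⟩ : ∃ k, t = k + 1 := ⟨t - 1, by omega⟩
    exact pathGraph_connected k
  have hdist : ∀ x y : Fin s × Fin t,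
      (pathGraph s □ pathGraph t).dist x y = Nat.dist x.1.val y.1.val + Nat.dist x.2.val y.2.val := by
    intro x y
    rw [boxProd_dist hsc htc, pathGraph_dist, pathGraph_dist]
  -- the two corner vertices
  set z₁ : Fin s × Fin t := ((⟨0, by omega⟩ : Fin s), (⟨0, by omega⟩ : Fin t)) with hz₁
  set z₂ : Fin s × Fin t := ((⟨0, by omega⟩ : Fin s), (⟨t - 1, by omega⟩ : Fin t)) with hz₂
  have hne : z₁ ≠ z₂ := by
    intro h
    have := congrArg (fun p => p.2.val) h
    simp only [hz₁, hz₂] at this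
    omega
  have hmem : 2 ∈ {n | ∃ W : Set (Fin s × Fin t), W.ncard = n ∧
      IsResolving (pathGraph s □ pathGraph t) W} := by
    refine ⟨{z₁, z₂}, Set.ncard_pair hne, ?_⟩
    intro x y hxy
    by_contra hcon
    push_neg at hcon
    have h1 := hcon z₁ (by simp)
    have h2 := hcon z₂ (by simp)
    rw [hdist, hdist] at h1 h2
    apply hxy
    have hx1 := x.1.isLt; have hx2 := x.2.isLt
    have hy1 := y.1.isLt; have hy2 := y.2.isLt
    simp only [hz₁, hz₂, Nat.dist] at h1 h2
    have hfst : x.1 = y.1 := Fin.ext (by omega)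
    have hsnd : x.2 = y.2 := Fin.ext (by omega)
    exact Prod.ext hfst hsnd
  refine le_antisymm (Nat.sInf_le hmem) (le_csInf ⟨2, hmem⟩ ?_)
  rintro n ⟨W, hcard, hres⟩
  by_contra hlt
  push_neg at hlt
  interval_cases n
  · -- empty set
    rw [Set.ncard_eq_zero (Set.toFinite W)] at hcard
    obtain ⟨z, hz, _⟩ := hres z₁ z₂ hne
    simp [hcard] at hz
  · -- singleton
    obtain ⟨z, rfl⟩ := Set.ncard_eq_one.mp hcard
    obtain ⟨a, b⟩ := z
    have ha := a.isLt; have hb := b.isLt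
    -- neighbors of (a, b) in each direction
    set a' : Fin s := if h : a.val = 0 then ⟨1, by omega⟩ else ⟨a.val - 1, by omega⟩ with ha'
    set b' : Fin t := if h : b.val = 0 then ⟨1, by omega⟩ else ⟨b.val - 1, by omega⟩ with hb'
    have hda : Nat.dist a'.val a.val = 1 := by
      by_cases h : a.val = 0 <;> simp [ha', h, Nat.dist] <;> omega
    have hdb : Nat.dist b'.val b.val = 1 := by
      by_cases h : b.val = 0 <;> simp [hb', h, Nat.dist] <;> omega
    have hxy : (a', b) ≠ (a, b') := by
      intro h
      rw [Prod.mk.injEq] at h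
      have : b.val = b'.val := congrArg Fin.val h.2
      simp [Nat.dist] at hdb
      omega
    obtain ⟨w, hw, hdne⟩ := hres (a', b) (a, b') hxy
    rw [Set.mem_singleton_iff] at hw
    subst hw
    apply hdne
    rw [hdist, hdist]
    simp [Nat.dist] at hda hdb ⊢
    omega
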